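/- arXiv:2411.05598 — 2 statements merged into one kernel-verified Lean document; each statement's English description precedes it below -/
import Mathlib

section
/- Let X be an A-correspondence and Y a B-correspondence, with I = ker φ_X ⊴ A and J = ker φ_Y ⊴ B. Suppose there exist an A-B correspondence R and a B-A correspondence S with X ≅ R ⊗_B S and S ⊗_A R ≅ Y (unitary correspondence isomorphisms). Then φ_R(I)R ⊆ RJ and φ_S(J)S ⊆ SI. -/
/-! Basic framework: C*-correspondences over (possibly non-unital) C*-algebras,
interior tensor products (characterized by their universal properties),
closed ideals, and unitary isomorphisms of correspondences. -/

noncomputable section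

/-- A (non-degenerate) A–B C*-correspondence: a right Hilbert `B`-module `X`
together with a left action of `A` by adjointable operators. -/
structure Corr (A B : Type) [NonUnitalCStarAlgebra A] [NonUnitalCStarAlgebra B] : Type 1 where
  X : Type
  [grp : NormedAddCommGroup X]
  [nsc : NormedSpace ℂ X]
  [cpl : CompleteSpace X]
  /-- the right action of `B` -/
  sm : X → B → X
  /-- the `B`-valued inner product (linear in the second variable) -/
  ip : X → X → B
  /-- the left action of `A` -/
  φ : A → X → X
  sm_add : ∀ x y b, sm (x + y) b = sm x b + sm y b
  sm_add' : ∀ x b c, sm x (b + c) = sm x b + sm x c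
  sm_mul : ∀ x b c, sm (sm x b) c = sm x (b * c)
  sm_smul : ∀ (t : ℂ) x b, sm (t • x) b = t • sm x b
  sm_smul' : ∀ (t : ℂ) x b, sm x (t • b) = t • sm x b
  ip_add : ∀ x y z, ip x (y + z) = ip x y + ip x z
  ip_smul : ∀ (t : ℂ) x y, ip x (t • y) = t • ip x y
  ip_sm : ∀ x y b, ip x (sm y b) = ip x y * b
  ip_star : ∀ x y, star (ip x y) = ip y x
  ip_pos : ∀ x, ∃ b, ip x x = star b * b
  ip_norm : ∀ x, ‖x‖ ^ 2 = ‖ip x x‖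
  φ_add : ∀ a x y, φ a (x + y) = φ a x + φ a y
  φ_add' : ∀ a b x, φ (a + b) x = φ a x + φ b x
  φ_smul : ∀ a (t : ℂ) x, φ a (t • x) = t • φ a x
  φ_smul' : ∀ (t : ℂ) a x, φ (t • a) x = t • φ a x
  φ_mul : ∀ a b x, φ (a * b) x = φ a (φ b x)
  φ_adj : ∀ a x y, ip (φ a x) y = ip x (φ (star a) y)
  /-- non-degeneracy of the left action -/
  nondeg : closure (Submodule.span ℂ {z | ∃ a x, z = φ a x} : Set X) = Set.univ

attribute [instance] Corr.grp Corr.nsc Corr.cpl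

variable {A B C : Type} [NonUnitalCStarAlgebra A] [NonUnitalCStarAlgebra B]
  [NonUnitalCStarAlgebra C]

/-- `Z.setR I` is the closed submodule `Z·I` of `Z`. -/
def Corr.setR (Z : Corr A B) (I : Set B) : Set Z.X :=
  closure (Submodule.span ℂ {x | ∃ ξ b, b ∈ I ∧ x = Z.sm ξ b} : Set Z.X)

/-- `Z.setL I` is the closed subspace `I·Z` of `Z`. -/
def Corr.setL (Z : Corr A B) (I : Set A) : Set Z.X :=
  closure (Submodule.span ℂ {x | ∃ a ξ, a ∈ I ∧ x = Z.φ a ξ} : Set Z.X)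

/-- `Z⁻¹(I) = {a ∈ A : φ_Z(a)Z ⊆ ZI}`. -/
def Corr.inv (Z : Corr A B) (I : Set B) : Set A := {a | ∀ ξ, Z.φ a ξ ∈ Z.setR I}

/-- The closed ideal of `B` generated by the inner products of `Z`. -/
def Corr.ipSet (Z : Corr A B) : Set B :=
  closure (Submodule.span ℂ {b | ∃ x y, b = Z.ip x y} : Set B)

/-- A generalized compact operator on the underlying Hilbert module of a correspondence:
one that is approximable in operator norm by finite sums of "rank one" operators
`θ_{ξ,η} : z ↦ ξ·⟨η,z⟩`. -/
def Corr.IsCompactOp (Z : Corr A B) (f : Z.X → Z.X) : Prop :=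
  ∀ ε > (0 : ℝ), ∃ (n : ℕ) (ξ η : Fin n → Z.X),
    ∀ z, ‖f z - ∑ i, Z.sm (ξ i) (Z.ip (η i) z)‖ ≤ ε * ‖z‖

/-- A closed (two-sided, automatically self-adjoint) ideal of a C*-algebra, as a set. -/
structure IsCIdeal {B : Type} [NonUnitalCStarAlgebra B] (I : Set B) : Prop where
  isClosed : IsClosed I
  zero_mem : (0 : B) ∈ I
  add_mem : ∀ x y, x ∈ I → y ∈ I → x + y ∈ I
  smul_mem : ∀ (t : ℂ) x, x ∈ I → t • x ∈ I
  mul_left_mem : ∀ b x, x ∈ I → b * x ∈ I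
  mul_right_mem : ∀ b x, x ∈ I → x * b ∈ I

/-- `t : Z₁ × Z₂ → T` exhibits `T` as the interior tensor product `Z₁ ⊗_B Z₂`. -/
structure IsTensor (Z₁ : Corr A B) (Z₂ : Corr B C) (T : Corr A C)
    (t : Z₁.X → Z₂.X → T.X) : Prop where
  add_left : ∀ x x' y, t (x + x') y = t x y + t x' y
  add_right : ∀ x y y', t x (y + y') = t x y + t x y'
  smul_left : ∀ (c : ℂ) x y, t (c • x) y = c • t x y
  balanced : ∀ x b y, t (Z₁.sm x b) y = t x (Z₂.φ b y)
  sm_right : ∀ x y c, t x (Z₂.sm y c) = T.sm (t x y) c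
  act_left : ∀ a x y, T.φ a (t x y) = t (Z₁.φ a x) y
  inner : ∀ x x' y y', T.ip (t x y) (t x' y') = Z₂.ip y (Z₂.φ (Z₁.ip x x') y')
  dense : closure (Submodule.span ℂ {z | ∃ x y, z = t x y} : Set T.X) = Set.univ

/-- `X ≅ Z₁ ⊗ Z₂` (unitary isomorphism with the interior tensor product). -/
def IsTensorProd (Z₁ : Corr A B) (Z₂ : Corr B C) (T : Corr A C) : Prop :=
  ∃ t, IsTensor Z₁ Z₂ T t

/-- A unitary isomorphism of A–B correspondences. -/
def CorrIso (Z W : Corr A B) : Prop :=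
  ∃ u : Z.X → W.X, Function.Surjective u ∧ (∀ x y, u (x + y) = u x + u y) ∧
    (∀ (c : ℂ) x, u (c • x) = c • u x) ∧ (∀ a x, u (Z.φ a x) = W.φ a (u x)) ∧
    (∀ x b, u (Z.sm x b) = W.sm (u x) b) ∧ (∀ x y, W.ip (u x) (u y) = Z.ip x y)

end

section Aux

variable {A B : Type} [NonUnitalCStarAlgebra A] [NonUnitalCStarAlgebra B]

private lemma real_smul_eq' {E : Type*} [AddCommMonoid E] [Module ℂ E] [Module ℝ E]
    [IsScalarTower ℝ ℂ E] (r : ℝ) (v : E) : (r : ℂ) • v = r • v := by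
  rw [show ((r:ℂ)) = r • (1:ℂ) by simp [Complex.real_smul], smul_assoc, one_smul]

namespace Corr

variable (Z : Corr A B)

lemma ip_zero_right (x : Z.X) : Z.ip x 0 = 0 := by
  have h := Z.ip_smul 0 x 0
  simpa using h

lemma ip_zero_left (x : Z.X) : Z.ip 0 x = 0 := by
  rw [← Z.ip_star]; simp [Z.ip_zero_right]

lemma eq_zero_of_ip_self {x : Z.X} (h : Z.ip x x = 0) : x = 0 := by
  have h2 := Z.ip_norm x
  rw [h, norm_zero] at h2
  have h3 : ‖x‖ = 0 := by
    have := sq_eq_zero_iff.mp h2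
    exact this
  simpa using h3

lemma ip_add_left (x y z : Z.X) : Z.ip (x + y) z = Z.ip x z + Z.ip y z := by
  rw [← Z.ip_star, Z.ip_add, star_add, Z.ip_star, Z.ip_star]

lemma ip_smul_left (t : ℂ) (x y : Z.X) : Z.ip (t • x) y = star t • Z.ip x y := by
  rw [← Z.ip_star, Z.ip_smul, star_smul, Z.ip_star]

lemma ip_neg_right (x y : Z.X) : Z.ip x (-y) = -Z.ip x y := by
  rw [show -y = (-1 : ℂ) • y by simp, Z.ip_smul]; simp

lemma ip_neg_left (x y : Z.X) : Z.ip (-x) y = -Z.ip x y := by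
  rw [← Z.ip_star, Z.ip_neg_right, star_neg, Z.ip_star]

lemma ip_sub_right (x y z : Z.X) : Z.ip x (y - z) = Z.ip x y - Z.ip x z := by
  rw [sub_eq_add_neg, Z.ip_add, Z.ip_neg_right, sub_eq_add_neg]

lemma ip_sub_left (x y z : Z.X) : Z.ip (x - y) z = Z.ip x z - Z.ip y z := by
  rw [sub_eq_add_neg, Z.ip_add_left, Z.ip_neg_left, sub_eq_add_neg]

lemma ip_sm_left (x y : Z.X) (b : B) : Z.ip (Z.sm x b) y = star b * Z.ip x y := by
  rw [← Z.ip_star, Z.ip_sm, star_mul, Z.ip_star]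

open Unitization in
lemma inr_ip_self_nonneg (x : Z.X) : (0 : Unitization ℂ B) ≤ (Z.ip x x : Unitization ℂ B) := by
  obtain ⟨b, hb⟩ := Z.ip_pos x
  rw [hb, Unitization.inr_mul, Unitization.inr_star]
  exact star_mul_self_nonneg _

lemma isSelfAdjoint_ip_self (x : Z.X) : IsSelfAdjoint (Z.ip x x) := Z.ip_star x x

open Unitization in
lemma norm_ip_le (x y : Z.X) : ‖Z.ip x y‖ ≤ ‖x‖ * ‖y‖ := by
  rcases eq_or_ne x 0 with rfl | hx
  · simp [Z.ip_zero_left]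
  have hx' : 0 < ‖x‖ := norm_pos_iff.mpr hx
  set a := Z.ip x y with ha
  set α : ℝ := ‖x‖ ^ 2 with hα
  have hα' : 0 < α := by positivity
  set z : Z.X := Z.sm x a - (α : ℂ) • y with hz
  have hzz : Z.ip z z = star a * Z.ip x x * a - (α:ℂ) • (star a * a)
      - (α:ℂ) • (star a * a) + (α:ℂ) • ((α:ℂ) • Z.ip y y) := by
    have e1 : Z.ip (Z.sm x a) (Z.sm x a) = star a * Z.ip x x * a := by
      rw [Z.ip_sm, Z.ip_sm_left]
    have e2 : Z.ip (Z.sm x a) ((α:ℂ) • y) = (α:ℂ) • (star a * a) := by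
      rw [Z.ip_smul, Z.ip_sm_left, ← ha]
    have e3 : Z.ip ((α:ℂ) • y) (Z.sm x a) = (α:ℂ) • (star a * a) := by
      rw [Z.ip_smul_left, Z.ip_sm]
      have : Z.ip y x = star a := by rw [ha, Z.ip_star]
      rw [this]
      simp [Complex.star_def, Complex.conj_ofReal]
    have e4 : Z.ip ((α:ℂ) • y) ((α:ℂ) • y) = (α:ℂ) • ((α:ℂ) • Z.ip y y) := by
      rw [Z.ip_smul, Z.ip_smul_left]
      simp [Complex.star_def, Complex.conj_ofReal]
    rw [hz, Z.ip_sub_right, Z.ip_sub_left, Z.ip_sub_left, e1, e2, e3, e4]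
    abel
  have h1 : (0 : Unitization ℂ B) ≤ (Z.ip z z : Unitization ℂ B) := Z.inr_ip_self_nonneg z
  have hcast : (Z.ip z z : Unitization ℂ B)
      = star (a : Unitization ℂ B) * (Z.ip x x : Unitization ℂ B) * (a : Unitization ℂ B)
        - α • (star (a : Unitization ℂ B) * (a : Unitization ℂ B))
        - α • (star (a : Unitization ℂ B) * (a : Unitization ℂ B))
        + α • (α • (Z.ip y y : Unitization ℂ B)) := by
    rw [hzz]
    push_cast [Unitization.inr_sub ℂ, Unitization.inr_add ℂ, Unitization.inr_mul,
      Unitization.inr_star, Unitization.inr_smul]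
    simp only [real_smul_eq']
  have hsa : IsSelfAdjoint ((Z.ip x x : B) : Unitization ℂ B) := by
    rw [IsSelfAdjoint, ← Unitization.inr_star]
    exact congrArg _ (Z.ip_star x x)
  have hnx : ‖((Z.ip x x : B) : Unitization ℂ B)‖ = α := by
    rw [Unitization.norm_inr, hα, Z.ip_norm]
  have hconj : star (a : Unitization ℂ B) * (Z.ip x x : Unitization ℂ B) * (a : Unitization ℂ B)
      ≤ α • (star (a : Unitization ℂ B) * (a : Unitization ℂ B)) := by
    have := CStarAlgebra.star_left_conjugate_le_norm_smul (a := (a : Unitization ℂ B))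
      (b := (Z.ip x x : Unitization ℂ B)) hsa
    rwa [hnx] at this
  set S : Unitization ℂ B := star (a : Unitization ℂ B) * (a : Unitization ℂ B) with hS
  set T : Unitization ℂ B := (Z.ip y y : Unitization ℂ B) with hT
  have h2 : α • S ≤ α • (α • T) := by
    have h3 : (Z.ip z z : Unitization ℂ B) ≤ α • S - α • S - α • S + α • (α • T) := by
      rw [hcast]
      gcongr
    have h4 : (0 : Unitization ℂ B) ≤ α • (α • T) - α • S := by
      calc (0 : Unitization ℂ B) ≤ (Z.ip z z : Unitization ℂ B) := h1
        _ ≤ α • S - α • S - α • S + α • (α • T) := h3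
        _ = α • (α • T) - α • S := by abel
    exact sub_nonneg.mp h4
  have h5 : S ≤ α • T := by
    rwa [smul_le_smul_iff_of_pos_left hα'] at h2
  have h6 : ‖a‖ ^ 2 ≤ α * ‖y‖ ^ 2 := by
    have h7 : ‖S‖ ≤ ‖α • T‖ := CStarAlgebra.norm_le_norm_of_nonneg_of_le
      (star_mul_self_nonneg _) h5
    have h8 : ‖S‖ = ‖a‖ ^ 2 := by
      rw [hS, CStarRing.norm_star_mul_self, Unitization.norm_inr, sq]
    have h9 : ‖α • T‖ = α * ‖y‖ ^ 2 := by
      rw [norm_smul, Real.norm_eq_abs, abs_of_pos hα', hT, Unitization.norm_inr, Z.ip_norm]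
    rw [h8, h9] at h7
    exact h7
  rw [hα] at h6
  have h10 : ‖a‖ ^ 2 ≤ (‖x‖ * ‖y‖) ^ 2 := by rw [mul_pow]; exact h6
  exact (pow_le_pow_iff_left₀ (norm_nonneg a) (by positivity) (by norm_num)).mp h10

lemma ip_right_continuous (w : Z.X) : Continuous (fun v => Z.ip w v) := by
  have h : LipschitzWith ‖w‖₊ (fun v => Z.ip w v) := by
    apply LipschitzWith.of_dist_le_mul
    intro u v
    rw [dist_eq_norm, dist_eq_norm, ← Z.ip_sub_right]
    calc ‖Z.ip w (u - v)‖ ≤ ‖w‖ * ‖u - v‖ := Z.norm_ip_le _ _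
      _ = ↑‖w‖₊ * ‖u - v‖ := by rw [coe_nnnorm]
  exact h.continuous

lemma φ_zero_right (a : A) : Z.φ a 0 = 0 := by
  have h := Z.φ_smul a 0 0
  simpa using h

lemma φ_continuous (a : A) : Continuous (Z.φ a) := by
  let g : Z.X →ₗ[ℂ] Z.X :=
    { toFun := Z.φ a, map_add' := Z.φ_add a, map_smul' := fun t x => Z.φ_smul a t x }
  have adj : ∀ w v, Z.ip w (Z.φ a v) = Z.ip (Z.φ (star a) w) v := by
    intro w v
    rw [Z.φ_adj, star_star]
  have hg : IsClosed (g.graph : Set (Z.X × Z.X)) := by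
    apply IsSeqClosed.isClosed
    intro u p hu hup
    rw [SetLike.mem_coe, LinearMap.mem_graph_iff]
    have h1 : Filter.Tendsto (fun n => (u n).1) Filter.atTop (nhds p.1) :=
      (Continuous.tendsto continuous_fst p).comp hup
    have h2 : Filter.Tendsto (fun n => (u n).2) Filter.atTop (nhds p.2) :=
      (Continuous.tendsto continuous_snd p).comp hup
    set w := p.2 - g p.1 with hw
    have hA : Filter.Tendsto (fun n => Z.ip w ((u n).2)) Filter.atTop (nhds (Z.ip w p.2)) :=
      ((Z.ip_right_continuous w).tendsto p.2).comp h2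
    have hB : (fun n => Z.ip w ((u n).2)) = fun n => Z.ip (Z.φ (star a) w) ((u n).1) := by
      funext n
      have hn : (u n).2 = g (u n).1 := (LinearMap.mem_graph_iff g (u n)).mp (hu n)
      rw [hn]
      exact adj w ((u n).1)
    have hC : Filter.Tendsto (fun n => Z.ip (Z.φ (star a) w) ((u n).1)) Filter.atTop
        (nhds (Z.ip (Z.φ (star a) w) p.1)) :=
      ((Z.ip_right_continuous _).tendsto p.1).comp h1
    have hD : Z.ip w p.2 = Z.ip (Z.φ (star a) w) p.1 := by
      rw [hB] at hA
      exact tendsto_nhds_unique hA hC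
    have hE : Z.ip w p.2 = Z.ip w (g p.1) := by
      rw [hD, ← adj]
      rfl
    have hF : Z.ip w w = 0 := by
      rw [hw, Z.ip_sub_right, ← hw, hE]
      exact sub_self _
    have := Z.eq_zero_of_ip_self hF
    rw [hw, sub_eq_zero] at this
    exact this
  exact g.continuous_of_isClosed_graph hg

lemma φ_eq_zero_on_closure (b : A) (M : Set Z.X)
    (hM : ∀ m ∈ M, Z.φ b m = 0)
    (hdense : closure (Submodule.span ℂ M : Set Z.X) = Set.univ) :
    ∀ η, Z.φ b η = 0 := by
  intro η
  have hη : η ∈ closure (Submodule.span ℂ M : Set Z.X) := by rw [hdense]; trivial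
  have hcl : IsClosed {v : Z.X | Z.φ b v = 0} := isClosed_eq (Z.φ_continuous b) continuous_const
  have hsub : (Submodule.span ℂ M : Set Z.X) ⊆ {v | Z.φ b v = 0} := by
    intro v hv
    induction hv using Submodule.span_induction with
    | mem x hx => exact hM x hx
    | zero => exact Z.φ_zero_right b
    | add x y _ _ hx hy =>
      show Z.φ b (x + y) = 0
      have hx' : Z.φ b x = 0 := hx
      have hy' : Z.φ b y = 0 := hy
      rw [Z.φ_add, hx', hy', add_zero]
    | smul t x _ hx =>
      show Z.φ b (t • x) = 0
      have hx' : Z.φ b x = 0 := hx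
      rw [Z.φ_smul, hx', smul_zero]
  exact (closure_minimal hsub hcl) hη

end Corr

end Aux

section Loc

variable {A B : Type} [NonUnitalCStarAlgebra A] [NonUnitalCStarAlgebra B]

open Unitization in
lemma Corr.mem_setR_of_ip_mem (Z : Corr A B) (J : Set B)
    (hadd : ∀ x y, x ∈ J → y ∈ J → x + y ∈ J)
    (hsmul : ∀ (t : ℂ) x, x ∈ J → t • x ∈ J)
    (hmul : ∀ x, x ∈ J → ∀ b, x * b ∈ J)
    {ξ : Z.X} (hc : Z.ip ξ ξ ∈ J) : ξ ∈ Z.setR J := by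
  set c := Z.ip ξ ξ with hcdef
  have hsa : IsSelfAdjoint c := Z.isSelfAdjoint_ip_self ξ
  have hspec : ∀ t ∈ quasispectrum ℝ c, 0 ≤ t := by
    rw [Unitization.quasispectrum_eq_spectrum_inr' ℝ ℂ c]
    exact fun t ht => spectrum_nonneg_of_nonneg (Z.inr_ip_self_nonneg ξ) ht
  rw [Corr.setR, Metric.mem_closure_iff]
  intro δ hδ
  set ε : ℝ := δ ^ 2 / 2 with hε
  have hε' : 0 < ε := by positivity
  set g : ℝ → ℝ := fun t => max t 0 / (max t 0 + ε) with hg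
  have hgc : Continuous g := by
    apply Continuous.div (by fun_prop) (by fun_prop)
    intro t
    positivity
  have hg0 : g 0 = 0 := by simp [hg]
  set b : B := cfcₙ g c with hb
  have hbsa : IsSelfAdjoint b := cfcₙ_predicate g c
  have hc1 : Continuous (fun t : ℝ => t * g t) := continuous_id.mul hgc
  have hc2 : Continuous (fun t : ℝ => g t * t) := hgc.mul continuous_id
  have hc3 : Continuous (fun t : ℝ => g t * t * g t) := hc2.mul hgc
  have hc5 : Continuous (fun t : ℝ => t - t * g t - g t * t) :=
    (continuous_id.sub hc1).sub hc2
  have hA1 : cfcₙ (fun t : ℝ => t * g t) c = c * b := by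
    rw [cfcₙ_mul (fun t : ℝ => t) g c continuous_id.continuousOn (by simp) hgc.continuousOn hg0, cfcₙ_id' ℝ c]
  have hA2 : cfcₙ (fun t : ℝ => g t * t) c = b * c := by
    rw [cfcₙ_mul g (fun t : ℝ => t) c hgc.continuousOn hg0 continuous_id.continuousOn (by simp), cfcₙ_id' ℝ c]
  have hA3 : cfcₙ (fun t : ℝ => g t * t * g t) c = b * c * b := by
    rw [cfcₙ_mul (fun t : ℝ => g t * t) g c hc2.continuousOn (by simp [hg0]) hgc.continuousOn hg0, hA2]
  have hd : Z.ip (ξ - Z.sm ξ b) (ξ - Z.sm ξ b)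
      = cfcₙ (fun t : ℝ => t - t * g t - g t * t + g t * t * g t) c := by
    have e1 : Z.ip ξ (Z.sm ξ b) = c * b := by rw [Z.ip_sm]
    have e2 : Z.ip (Z.sm ξ b) ξ = b * c := by
      rw [Z.ip_sm_left, hbsa.star_eq]
    have e3 : Z.ip (Z.sm ξ b) (Z.sm ξ b) = b * c * b := by rw [Z.ip_sm, e2]
    rw [cfcₙ_add (fun t : ℝ => t - t * g t - g t * t) (fun t : ℝ => g t * t * g t) c
        hc5.continuousOn (by simp [hg0]) hc3.continuousOn (by simp [hg0]),
      cfcₙ_sub (fun t : ℝ => t - t * g t) (fun t : ℝ => g t * t) c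
        (continuous_id.sub hc1).continuousOn (by simp [hg0]) hc2.continuousOn (by simp [hg0]),
      cfcₙ_sub (fun t : ℝ => t) (fun t : ℝ => t * g t) c
        continuous_id.continuousOn (by simp) hc1.continuousOn (by simp [hg0]),
      hA1, hA2, hA3, cfcₙ_id' ℝ c]
    rw [Z.ip_sub_right, Z.ip_sub_left, Z.ip_sub_left, e1, e2, e3]
    abel
  have hnorm : ‖Z.ip (ξ - Z.sm ξ b) (ξ - Z.sm ξ b)‖ ≤ ε := by
    rw [hd]
    apply norm_cfcₙ_le
    intro t ht
    have ht0 : 0 ≤ t := hspec t ht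
    have hden : 0 < t + ε := by positivity
    have hgt : g t = t / (t + ε) := by rw [hg]; simp [max_eq_left ht0]
    have key : t - t * g t - g t * t + g t * t * g t = t * ε ^ 2 / (t + ε) ^ 2 := by
      rw [hgt]
      field_simp
      ring
    have h0 : 0 ≤ t * ε ^ 2 / (t + ε) ^ 2 := by positivity
    rw [Real.norm_eq_abs, key, abs_of_nonneg h0, div_le_iff₀ (by positivity)]
    nlinarith [sq_nonneg t, mul_nonneg ht0 hε'.le]
  have hεb : (ε : ℂ) • b = c - c * b := by
    have h1 : cfcₙ (fun t : ℝ => ε * g t) c = ε • b :=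
      cfcₙ_const_mul ε g c hgc.continuousOn hg0
    have h2 : cfcₙ (fun t : ℝ => ε * g t) c = cfcₙ (fun t : ℝ => t - t * g t) c := by
      apply cfcₙ_congr
      intro t ht
      have ht0 : 0 ≤ t := hspec t ht
      have hden : 0 < t + ε := by positivity
      have hgt : g t = t / (t + ε) := by rw [hg]; simp [max_eq_left ht0]
      show ε * g t = t - t * g t
      rw [hgt]
      field_simp
      ring
    have h3 : cfcₙ (fun t : ℝ => t - t * g t) c = c - c * b := by
      rw [cfcₙ_sub (fun t : ℝ => t) (fun t : ℝ => t * g t) c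
          continuous_id.continuousOn (by simp) hc1.continuousOn (by simp [hg0]),
        hA1, cfcₙ_id' ℝ c]
    rw [real_smul_eq', ← h1, h2, h3]
  have hbJ : b ∈ J := by
    have hrw : b = (ε⁻¹ : ℂ) • ((ε : ℂ) • b) := by
      rw [smul_smul, inv_mul_cancel₀ (by exact_mod_cast hε'.ne' : ((ε:ℝ):ℂ) ≠ 0), one_smul]
    rw [hrw, hεb, show c - c * b = c + (-1 : ℂ) • (c * b) by rw [neg_one_smul, ← sub_eq_add_neg]]
    exact hsmul _ _ (hadd _ _ hc (hsmul _ _ (hmul _ hc b)))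
  refine ⟨Z.sm ξ b, ?_, ?_⟩
  · exact Submodule.subset_span ⟨ξ, b, hbJ, rfl⟩
  · rw [dist_eq_norm]
    have h5 : ‖ξ - Z.sm ξ b‖ ^ 2 ≤ ε := by rw [Z.ip_norm]; exact hnorm
    rw [hε] at h5
    nlinarith [norm_nonneg (ξ - Z.sm ξ b), hδ]

end Loc

section Key

theorem stmt9_key {A B : Type} [NonUnitalCStarAlgebra A] [NonUnitalCStarAlgebra B]
    (X : Corr A A) (Y : Corr B B) (R : Corr A B) (S : Corr B A)
    (hX : IsTensorProd R S X) (hY : IsTensorProd S R Y) :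
    ∀ a ∈ {a : A | ∀ ξ, X.φ a ξ = 0}, ∀ r, R.φ a r ∈ R.setR {b : B | ∀ η, Y.φ b η = 0} := by
  obtain ⟨t, ht⟩ := hX
  obtain ⟨u, hu⟩ := hY
  intro a ha r
  set ξ := R.φ a r with hξ
  -- Step A: S.φ (R.ip ξ ξ) kills every element of S
  have hS : ∀ s, S.φ (R.ip ξ ξ) s = 0 := by
    intro s
    apply S.eq_zero_of_ip_self
    have h1 := (ht.inner ξ ξ (S.φ (R.ip ξ ξ) s) s).symm
    have h2 : t ξ (S.φ (R.ip ξ ξ) s) = 0 := by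
      rw [hξ, ← ht.act_left a r (S.φ (R.ip ξ ξ) s), ha]
    rw [h2, X.ip_zero_left] at h1
    exact h1
  -- Step B: R.ip ξ ξ is in the kernel ideal of Y
  have hcJ : ∀ η, Y.φ (R.ip ξ ξ) η = 0 := by
    apply Y.φ_eq_zero_on_closure (R.ip ξ ξ) {z | ∃ s r', z = u s r'} ?_ hu.dense
    rintro m ⟨s, r', rfl⟩
    rw [hu.act_left (R.ip ξ ξ) s r', hS s]
    have h0 := hu.add_left 0 0 r'
    rw [add_zero] at h0
    have h0' : u 0 r' + 0 = u 0 r' + u 0 r' := by rw [add_zero]; exact h0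
    exact (add_left_cancel h0').symm
  -- Conclude with the localization lemma
  apply R.mem_setR_of_ip_mem {b : B | ∀ η, Y.φ b η = 0}
  · intro x y hx hy η
    rw [Y.φ_add', hx, hy, add_zero]
  · intro c x hx η
    rw [Y.φ_smul', hx, smul_zero]
  · intro x hx b η
    rw [Y.φ_mul, hx]
  · exact hcJ

end Key

/-- if `X ≅ R ⊗_B S` and `S ⊗_A R ≅ Y`, and `I = ker φ_X`, `J = ker φ_Y`,
then `φ_R(I)R ⊆ RJ` and `φ_S(J)S ⊆ SI`. -/
theorem stmt9 {A B : Type} [NonUnitalCStarAlgebra A] [NonUnitalCStarAlgebra B]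
    (X : Corr A A) (Y : Corr B B) (R : Corr A B) (S : Corr B A)
    (hX : IsTensorProd R S X) (hY : IsTensorProd S R Y) :
    (∀ a ∈ {a : A | ∀ ξ, X.φ a ξ = 0}, ∀ r, R.φ a r ∈ R.setR {b : B | ∀ η, Y.φ b η = 0}) ∧
    (∀ b ∈ {b : B | ∀ η, Y.φ b η = 0}, ∀ s, S.φ b s ∈ S.setR {a : A | ∀ ξ, X.φ a ξ = 0}) := by
  exact ⟨stmt9_key X Y R S hX hY, stmt9_key Y X S R hY hX⟩
end

section
/- Let X be a Hilbert A-module, Y a Hilbert B-module, φ : A → L(Y) a *-homomorphism, and V ∈ L(X) with V ⊗ 1 ∈ K(X ⊗_A Y). Then ran(V) ⊆ X·φ^{-1}(K(Y)), i.e., Vξ lies in the closed span of {ξ'a : ξ' ∈ X, a ∈ A with φ(a) ∈ K(Y)} for every ξ ∈ X. -/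
/-! Right Hilbert C*-modules over a (possibly non-unital) C*-algebra. -/

noncomputable section

/-- A right Hilbert `B`-module. -/
structure HilbMod (B : Type) [NonUnitalCStarAlgebra B] : Type 1 where
  X : Type
  [grp : NormedAddCommGroup X]
  [nsc : NormedSpace ℂ X]
  [cpl : CompleteSpace X]
  sm : X → B → X
  ip : X → X → B
  sm_add : ∀ x y b, sm (x + y) b = sm x b + sm y b
  sm_add' : ∀ x b c, sm x (b + c) = sm x b + sm x c
  sm_mul : ∀ x b c, sm (sm x b) c = sm x (b * c)
  sm_smul : ∀ (t : ℂ) x b, sm (t • x) b = t • sm x b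
  sm_smul' : ∀ (t : ℂ) x b, sm x (t • b) = t • sm x b
  ip_add : ∀ x y z, ip x (y + z) = ip x y + ip x z
  ip_smul : ∀ (t : ℂ) x y, ip x (t • y) = t • ip x y
  ip_sm : ∀ x y b, ip x (sm y b) = ip x y * b
  ip_star : ∀ x y, star (ip x y) = ip y x
  ip_pos : ∀ x, ∃ b, ip x x = star b * b
  ip_norm : ∀ x, ‖x‖ ^ 2 = ‖ip x x‖

attribute [instance] HilbMod.grp HilbMod.nsc HilbMod.cpl

variable {B : Type} [NonUnitalCStarAlgebra B]

/-- `Z.setR J` is the closed submodule `Z·J`. -/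
def HilbMod.setR (Z : HilbMod B) (J : Set B) : Set Z.X :=
  closure (Submodule.span ℂ {x | ∃ ξ b, b ∈ J ∧ x = Z.sm ξ b} : Set Z.X)

/-- A generalized compact operator on a Hilbert module: approximable in operator norm by
finite sums of rank-one operators `θ_{ξ,η} : z ↦ ξ·⟨η,z⟩`. -/
def HilbMod.IsCompactOp (Z : HilbMod B) (f : Z.X → Z.X) : Prop :=
  ∀ ε > (0 : ℝ), ∃ (n : ℕ) (ξ η : Fin n → Z.X),
    ∀ z, ‖f z - ∑ i, Z.sm (ξ i) (Z.ip (η i) z)‖ ≤ ε * ‖z‖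

/-- `π : B → B'` realizes `B'` as the quotient C*-algebra `B/I`. -/
structure IsQuotAlg {B B' : Type} [NonUnitalCStarAlgebra B] [NonUnitalCStarAlgebra B']
    (π : B → B') (I : Set B) : Prop where
  surj : Function.Surjective π
  map_add : ∀ a b, π (a + b) = π a + π b
  map_mul : ∀ a b, π (a * b) = π a * π b
  map_star : ∀ a, π (star a) = star (π a)
  map_smul : ∀ (t : ℂ) a, π (t • a) = t • π a
  ker : ∀ a, π a = 0 ↔ a ∈ I

namespace HilbMod

variable (Z : HilbMod B)

lemma ip_zero (x : Z.X) : Z.ip x 0 = 0 := by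
  have := Z.ip_add x 0 0
  simpa using this.symm

lemma zero_ip (x : Z.X) : Z.ip 0 x = 0 := by
  rw [← Z.ip_star, ip_zero, star_zero]

lemma ip_neg (x y : Z.X) : Z.ip x (-y) = - Z.ip x y := by
  have : (-y) = (-1 : ℂ) • y := by simp
  rw [this, Z.ip_smul]; simp

lemma ip_sub (x y z : Z.X) : Z.ip x (y - z) = Z.ip x y - Z.ip x z := by
  rw [sub_eq_add_neg, Z.ip_add, ip_neg, sub_eq_add_neg]

lemma add_ip (x y z : Z.X) : Z.ip (x + y) z = Z.ip x z + Z.ip y z := by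
  rw [← Z.ip_star, Z.ip_add, star_add, Z.ip_star, Z.ip_star]

lemma sub_ip (x y z : Z.X) : Z.ip (x - y) z = Z.ip x z - Z.ip y z := by
  rw [← Z.ip_star, Z.ip_sub, star_sub, Z.ip_star, Z.ip_star]

lemma smul_ip (t : ℂ) (x y : Z.X) : Z.ip (t • x) y = (starRingEnd ℂ t) • Z.ip x y := by
  rw [← Z.ip_star, Z.ip_smul, star_smul, Z.ip_star]; rfl

lemma sm_ip (x y : Z.X) (b : B) : Z.ip (Z.sm x b) y = star b * Z.ip x y := by
  rw [← Z.ip_star, Z.ip_sm, star_mul, Z.ip_star]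

lemma sm_zero (x : Z.X) : Z.sm x 0 = 0 := by
  have := Z.sm_add' x 0 0
  simpa using this.symm

lemma zero_sm (b : B) : Z.sm 0 b = 0 := by
  have := Z.sm_add 0 0 b
  simpa using this.symm

lemma norm_ip_self (x : Z.X) : ‖Z.ip x x‖ = ‖x‖ ^ 2 := (Z.ip_norm x).symm

lemma eq_zero_of_ip_self (x : Z.X) (h : Z.ip x x = 0) : x = 0 := by
  have := Z.ip_norm x
  rw [h, norm_zero, pow_eq_zero_iff (by norm_num)] at this
  exact norm_eq_zero.mp this

lemma ip_self_sa (x : Z.X) : IsSelfAdjoint (Z.ip x x) := Z.ip_star x x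

/-- Cauchy–Schwarz. -/
lemma cs (x y : Z.X) : ‖Z.ip x y‖ ≤ ‖x‖ * ‖y‖ := by
  rcases eq_or_ne x 0 with rfl | hx0
  · simp [Z.zero_ip]
  have hx : 0 < ‖x‖ := norm_pos_iff.mpr hx0
  set c := Z.ip x y with hc
  set t : ℝ := 1 / ‖x‖ ^ 2 with ht
  have ht0 : 0 < t := by positivity
  set b : B := (t : ℂ) • c with hb
  -- expand e = ip (x·b - y) (x·b - y)
  obtain ⟨d, hd⟩ := Z.ip_pos (Z.sm x b - y)
  have hexp : Z.ip (Z.sm x b - y) (Z.sm x b - y)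
      = star b * (Z.ip x x * b) - star c * b - (star b * c - Z.ip y y) := by
    rw [Z.ip_sub, Z.sub_ip, Z.sub_ip, Z.sm_ip, Z.sm_ip, Z.ip_sm, Z.ip_sm]
    rw [← hc, ← Z.ip_star x y, ← hc]
  -- rearrange: star c * b + star b * c = star b * (a*b) + q - e
  have key : star c * b + star b * c
      = star b * (Z.ip x x * b) + Z.ip y y - star d * d := by
    rw [← hd, hexp]; abel
  have hsb : star b = (t : ℂ) • star c := by
    rw [hb, star_smul]; norm_num
  have hlhs : star c * b + star b * c = ((2 * t : ℝ) : ℂ) • (star c * c) := by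
    rw [hb, hsb]; push_cast
    rw [mul_smul_comm, smul_mul_assoc]
    rw [← add_smul]
    ring_nf
  -- lhs = star c₂ * c₂
  have h2t : (0:ℝ) ≤ 2 * t := by positivity
  have hlhs2 : star c * b + star b * c
      = star (((Real.sqrt (2*t) : ℝ) : ℂ) • c) * (((Real.sqrt (2*t) : ℝ) : ℂ) • c) := by
    rw [hlhs, star_smul, smul_mul_smul_comm]
    congr 1
    simp only [Complex.star_def, Complex.conj_ofReal, ← Complex.ofReal_mul,
      Real.mul_self_sqrt h2t]
  -- norm inequality via unitization order
  have hnorm : ‖((2*t : ℝ):ℂ) • (star c * c)‖ ≤ ‖star b * (Z.ip x x * b) + Z.ip y y‖ := by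
    letI := CStarAlgebra.spectralOrder (Unitization ℂ B)
    letI := CStarAlgebra.spectralOrderedRing (Unitization ℂ B)
    have keypos : ∀ u : B, (0:Unitization ℂ B) ≤ ((star u * u : B) : Unitization ℂ B) := fun u => by
      rw [Unitization.inr_mul, Unitization.inr_star]
      exact star_mul_self_nonneg _
    have h1 : (0 : Unitization ℂ B) ≤ ((star c * b + star b * c : B) : Unitization ℂ B) := by
      rw [hlhs2]; exact keypos _
    have h2 : ((star c * b + star b * c : B) : Unitization ℂ B)
        ≤ ((star b * (Z.ip x x * b) + Z.ip y y : B) : Unitization ℂ B) := by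
      have heq : (star b * (Z.ip x x * b) + Z.ip y y : B)
          = (star c * b + star b * c) + star d * d := by rw [key]; abel
      rw [heq]
      calc ((star c * b + star b * c : B) : Unitization ℂ B)
          ≤ ((star c * b + star b * c : B) : Unitization ℂ B) + ((star d * d : B) : Unitization ℂ B) :=
            le_add_of_nonneg_right (keypos d)
        _ = _ := (Unitization.inr_add ℂ _ _).symm
    have h3 := CStarAlgebra.norm_le_norm_of_nonneg_of_le h1 h2
    rw [Unitization.norm_inr, Unitization.norm_inr, hlhs] at h3
    exact h3
  -- compute both sides
  have hnc : ‖star c * c‖ = ‖c‖^2 := by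
    rw [CStarRing.norm_star_mul_self, sq]
  have hleft : ‖((2*t : ℝ):ℂ) • (star c * c)‖ = 2*t*‖c‖^2 := by
    rw [norm_smul, hnc, Complex.norm_real, Real.norm_eq_abs, abs_of_nonneg h2t]
  have hright : ‖star b * (Z.ip x x * b) + Z.ip y y‖ ≤ t^2*‖c‖^2*‖x‖^2 + ‖y‖^2 := by
    refine (norm_add_le _ _).trans ?_
    gcongr
    · calc ‖star b * (Z.ip x x * b)‖ ≤ ‖star b‖ * (‖Z.ip x x‖ * ‖b‖) :=
            (norm_mul_le _ _).trans (by gcongr; exact norm_mul_le _ _)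
        _ = ‖b‖^2 * ‖x‖^2 := by rw [norm_star, Z.norm_ip_self]; ring
        _ ≤ (t*‖c‖)^2 * ‖x‖^2 := by
            gcongr
            rw [hb, norm_smul, Complex.norm_real, Real.norm_eq_abs, abs_of_nonneg ht0.le]
        _ = t^2*‖c‖^2*‖x‖^2 := by ring
    · rw [Z.norm_ip_self]
  have hfin : 2*t*‖c‖^2 ≤ t^2*‖c‖^2*‖x‖^2 + ‖y‖^2 := by
    rw [← hleft]; exact hnorm.trans hright
  have ht2 : t * ‖x‖^2 = 1 := by
    rw [ht]; field_simp
  have hc2 : ‖c‖^2 ≤ (‖x‖*‖y‖)^2 := by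
    have h3 : t^2*‖c‖^2*‖x‖^2 = t * ‖c‖^2 := by
      rw [show t^2*‖c‖^2*‖x‖^2 = (t*‖x‖^2)*(t*‖c‖^2) by ring, ht2, one_mul]
    rw [h3] at hfin
    have h4 : t*‖c‖^2 ≤ ‖y‖^2 := by linarith
    have h5 : ‖c‖^2 ≤ ‖x‖^2*‖y‖^2 := by
      have := mul_le_mul_of_nonneg_left h4 (le_of_lt (by positivity : (0:ℝ) < ‖x‖^2))
      rw [show ‖x‖^2*(t*‖c‖^2) = (t*‖x‖^2)*‖c‖^2 by ring, ht2, one_mul] at this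
      exact this
    calc ‖c‖^2 ≤ ‖x‖^2*‖y‖^2 := h5
      _ = (‖x‖*‖y‖)^2 := by ring
  calc ‖Z.ip x y‖ = Real.sqrt (‖c‖^2) := by rw [Real.sqrt_sq (norm_nonneg c)]
    _ ≤ Real.sqrt ((‖x‖*‖y‖)^2) := Real.sqrt_le_sqrt hc2
    _ = ‖x‖*‖y‖ := Real.sqrt_sq (by positivity)

lemma norm_sm_le (x : Z.X) (b : B) : ‖Z.sm x b‖ ≤ ‖x‖ * ‖b‖ := by
  have h : ‖Z.sm x b‖^2 ≤ (‖x‖*‖b‖)^2 := by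
    rw [Z.ip_norm, Z.sm_ip, Z.ip_sm]
    calc ‖star b * (Z.ip x x * b)‖ ≤ ‖star b‖ * (‖Z.ip x x‖ * ‖b‖) :=
          (norm_mul_le _ _).trans (by gcongr; exact norm_mul_le _ _)
      _ = ‖b‖ * (‖x‖^2 * ‖b‖) := by rw [norm_star, Z.norm_ip_self]
      _ = (‖x‖*‖b‖)^2 := by ring
  calc ‖Z.sm x b‖ = Real.sqrt (‖Z.sm x b‖^2) := (Real.sqrt_sq (norm_nonneg _)).symm
    _ ≤ Real.sqrt ((‖x‖*‖b‖)^2) := Real.sqrt_le_sqrt h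
    _ = ‖x‖*‖b‖ := Real.sqrt_sq (by positivity)

lemma eq_of_ip_eq {u v : Z.X} (h : ∀ w, Z.ip w u = Z.ip w v) : u = v := by
  have h2 : Z.ip (u - v) (u - v) = 0 := by
    rw [Z.ip_sub, h (u-v), sub_self]
  have := Z.eq_zero_of_ip_self _ h2
  rwa [sub_eq_zero] at this

/-- `W` is adjointable with adjoint `W'`. -/
def Adj (W W' : Z.X → Z.X) : Prop := ∀ x y, Z.ip (W x) y = Z.ip x (W' y)

variable {Z}

lemma Adj.ip_right {W W' : Z.X → Z.X} (h : Z.Adj W W') (x y : Z.X) :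
    Z.ip x (W y) = Z.ip (W' x) y := by
  rw [← Z.ip_star, h, Z.ip_star]

lemma Adj.add {W W' : Z.X → Z.X} (h : Z.Adj W W') (x y : Z.X) :
    W (x + y) = W x + W y := by
  refine Z.eq_of_ip_eq fun w => ?_
  rw [h.ip_right, Z.ip_add, Z.ip_add, h.ip_right, h.ip_right]

lemma Adj.smul {W W' : Z.X → Z.X} (h : Z.Adj W W') (c : ℂ) (x : Z.X) :
    W (c • x) = c • W x := by
  refine Z.eq_of_ip_eq fun w => ?_
  rw [h.ip_right, Z.ip_smul, Z.ip_smul, h.ip_right]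

lemma Adj.map_zero {W W' : Z.X → Z.X} (h : Z.Adj W W') : W 0 = 0 := by
  have := h.add 0 0
  simpa using this.symm

lemma Adj.sub {W W' : Z.X → Z.X} (h : Z.Adj W W') (x y : Z.X) :
    W (x - y) = W x - W y := by
  refine Z.eq_of_ip_eq fun w => ?_
  rw [h.ip_right, Z.ip_sub, Z.ip_sub, h.ip_right, h.ip_right]

lemma Adj.sm {W W' : Z.X → Z.X} (h : Z.Adj W W') (x : Z.X) (b : B) :
    W (Z.sm x b) = Z.sm (W x) b := by
  refine Z.eq_of_ip_eq fun w => ?_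
  rw [h.ip_right, Z.ip_sm, Z.ip_sm, h.ip_right]

/-- Adjointable maps are bounded (closed graph theorem). -/
lemma Adj.bound {W W' : Z.X → Z.X} (h : Z.Adj W W') :
    ∃ C : ℝ, 0 ≤ C ∧ ∀ x, ‖W x‖ ≤ C * ‖x‖ := by
  let L : Z.X →ₗ[ℂ] Z.X :=
    { toFun := W, map_add' := h.add, map_smul' := h.smul }
  have hcont : Continuous L := by
    apply L.continuous_of_seq_closed_graph
    intro u x y hux huy
    refine Z.eq_of_ip_eq fun w => ?_
    have h1 : Filter.Tendsto (fun n => Z.ip w (W (u n))) Filter.atTop (nhds (Z.ip w y)) := by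
      have : ∀ n, ‖Z.ip w (W (u n)) - Z.ip w y‖ ≤ ‖w‖ * ‖W (u n) - y‖ := fun n => by
        rw [← Z.ip_sub]; exact Z.cs _ _
      refine tendsto_iff_norm_sub_tendsto_zero.mpr ?_
      refine squeeze_zero (fun n => norm_nonneg _) this ?_
      have := (tendsto_iff_norm_sub_tendsto_zero.mp huy).const_mul ‖w‖
      have h' : Filter.Tendsto (fun n => ‖w‖ * ‖W (u n) - y‖) Filter.atTop (nhds (‖w‖ * 0)) := this
      simpa using h'
    have h2 : Filter.Tendsto (fun n => Z.ip w (W (u n))) Filter.atTop (nhds (Z.ip w (W x))) := by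
      have heq : ∀ n, Z.ip w (W (u n)) = Z.ip (W' w) (u n) := fun n => h.ip_right w (u n)
      simp only [heq, h.ip_right w x]
      have : ∀ n, ‖Z.ip (W' w) (u n) - Z.ip (W' w) x‖ ≤ ‖W' w‖ * ‖u n - x‖ := fun n => by
        rw [← Z.ip_sub]; exact Z.cs _ _
      refine tendsto_iff_norm_sub_tendsto_zero.mpr ?_
      refine squeeze_zero (fun n => norm_nonneg _) this ?_
      have := (tendsto_iff_norm_sub_tendsto_zero.mp hux).const_mul ‖W' w‖
      simpa using this
    exact tendsto_nhds_unique h1 h2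
  obtain ⟨C, hC, hb⟩ := (⟨L, hcont⟩ : Z.X →L[ℂ] Z.X).bound
  exact ⟨C, hC.le, hb⟩

variable (Z)

/-- Finite-rank approximation sum indexed by a list. -/
def r1 (l : List (Z.X × Z.X)) (z : Z.X) : Z.X :=
  (l.map fun p => Z.sm p.1 (Z.ip p.2 z)).sum

@[simp] lemma r1_nil (z : Z.X) : Z.r1 [] z = 0 := rfl

@[simp] lemma r1_cons (p : Z.X × Z.X) (l : List (Z.X × Z.X)) (z : Z.X) :
    Z.r1 (p :: l) z = Z.sm p.1 (Z.ip p.2 z) + Z.r1 l z := by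
  simp [r1]

lemma ip_list_sum {α : Type} (w : Z.X) (l : List α) (f : α → Z.X) :
    Z.ip w (l.map f).sum = (l.map fun a => Z.ip w (f a)).sum := by
  induction l with
  | nil => simp [Z.ip_zero]
  | cons a l ih => simp [Z.ip_add, ih]

lemma list_sum_ip {α : Type} (w : Z.X) (l : List α) (f : α → Z.X) :
    Z.ip (l.map f).sum w = (l.map fun a => Z.ip (f a) w).sum := by
  induction l with
  | nil => simp [Z.zero_ip]
  | cons a l ih => simp [Z.add_ip, ih]

lemma sm_list_sum {α : Type} (x : Z.X) (l : List α) (f : α → B) :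
    Z.sm x (l.map f).sum = (l.map fun a => Z.sm x (f a)).sum := by
  induction l with
  | nil => simp [Z.sm_zero]
  | cons a l ih => simp [Z.sm_add', ih]

lemma list_sum_sm {α : Type} (b : B) (l : List α) (f : α → Z.X) :
    Z.sm (l.map f).sum b = (l.map fun a => Z.sm (f a) b).sum := by
  induction l with
  | nil => simp [Z.zero_sm]
  | cons a l ih => simp [Z.sm_add, ih]

/-- Convert a list of pairs into `Fin`-indexed families. -/
lemma fin_of_list (l : List (Z.X × Z.X)) :
    ∃ (n : ℕ) (ξ η : Fin n → Z.X), ∀ z, Z.r1 l z = ∑ i, Z.sm (ξ i) (Z.ip (η i) z) := by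
  induction l with
  | nil => exact ⟨0, Fin.elim0, Fin.elim0, fun z => by simp⟩
  | cons p l ih =>
    obtain ⟨n, ξ, η, hl⟩ := ih
    refine ⟨n+1, Fin.cons p.1 ξ, Fin.cons p.2 η, fun z => ?_⟩
    rw [Z.r1_cons, hl z, Fin.sum_univ_succ]
    simp

lemma isCompactOp_of_lists {f : Z.X → Z.X}
    (h : ∀ ε > (0:ℝ), ∃ l : List (Z.X × Z.X), ∀ z, ‖f z - Z.r1 l z‖ ≤ ε * ‖z‖) :
    Z.IsCompactOp f := by
  intro ε hε
  obtain ⟨l, hl⟩ := h ε hε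
  obtain ⟨n, ξ, η, he⟩ := Z.fin_of_list l
  exact ⟨n, ξ, η, fun z => by rw [← he z]; exact hl z⟩

lemma lists_of_isCompactOp {f : Z.X → Z.X} (h : Z.IsCompactOp f) :
    ∀ ε > (0:ℝ), ∃ l : List (Z.X × Z.X), ∀ z, ‖f z - Z.r1 l z‖ ≤ ε * ‖z‖ := by
  intro ε hε
  obtain ⟨n, ξ, η, hb⟩ := h ε hε
  refine ⟨(List.finRange n).map fun i => (ξ i, η i), fun z => ?_⟩
  have : Z.r1 ((List.finRange n).map fun i => (ξ i, η i)) z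
      = ∑ i, Z.sm (ξ i) (Z.ip (η i) z) := by
    rw [r1, List.map_map, Fin.sum_univ_def]
    rfl
  rw [this]; exact hb z

/-- compose a compact operator with a bounded module map on the left. -/
lemma IsCompactOp.comp {f g : Z.X → Z.X} (hf : Z.IsCompactOp f)
    (hadd : ∀ x y, g (x + y) = g x + g y)
    (hsm : ∀ x b, g (Z.sm x b) = Z.sm (g x) b)
    (hbd : ∃ C : ℝ, 0 ≤ C ∧ ∀ x, ‖g x‖ ≤ C * ‖x‖) :
    Z.IsCompactOp (fun z => g (f z)) := by
  obtain ⟨C, hC0, hC⟩ := hbd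
  have hg0 : g 0 = 0 := by
    have := hadd 0 0; simpa using this.symm
  have hgsub : ∀ x y, g (x - y) = g x - g y := by
    intro x y
    have h1 : g (x - y) + g y = g x := by rw [← hadd]; congr 1; abel
    exact eq_sub_of_add_eq h1
  refine Z.isCompactOp_of_lists fun ε hε => ?_
  have hε' : (0:ℝ) < ε / (C + 1) := by positivity
  obtain ⟨l, hl⟩ := Z.lists_of_isCompactOp hf _ hε'
  have hr : ∀ l : List (Z.X × Z.X), ∀ z, Z.r1 (l.map fun p => (g p.1, p.2)) z = g (Z.r1 l z) := by
    intro l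
    induction l with
    | nil => intro z; simp [r1, hg0]
    | cons p l ih => intro z; simp only [List.map_cons, r1_cons, hadd, hsm, ih]
  refine ⟨l.map fun p => (g p.1, p.2), fun z => ?_⟩
  rw [hr, ← hgsub]
  calc ‖g (f z - Z.r1 l z)‖ ≤ C * ‖f z - Z.r1 l z‖ := hC _
    _ ≤ C * (ε / (C+1) * ‖z‖) := by gcongr; exact hl z
    _ ≤ ε * ‖z‖ := by
        rw [show C * (ε / (C+1) * ‖z‖) = (C/(C+1)) * (ε * ‖z‖) by ring]
        have h1 : C/(C+1) ≤ 1 := by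
          rw [div_le_one (by positivity)]; linarith
        calc (C/(C+1)) * (ε * ‖z‖) ≤ 1 * (ε * ‖z‖) :=
              mul_le_mul_of_nonneg_right h1 (by positivity)
          _ = ε * ‖z‖ := one_mul _

lemma sm_sub (x y : Z.X) (b : B) : Z.sm (x - y) b = Z.sm x b - Z.sm y b := by
  have h := Z.sm_add (x - y) y b
  rw [sub_add_cancel] at h
  rw [h]; abel

lemma sm_sub' (x : Z.X) (b c : B) : Z.sm x (b - c) = Z.sm x b - Z.sm x c := by
  have h := Z.sm_add' x (b - c) c
  rw [sub_add_cancel] at h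
  rw [h]; abel

lemma r1_append (l1 l2 : List (Z.X × Z.X)) (z : Z.X) :
    Z.r1 (l1 ++ l2) z = Z.r1 l1 z + Z.r1 l2 z := by
  simp [r1]

end HilbMod

private lemma psi_ineq (r τ : ℝ) (hr0 : 0 < r) : |τ| * (2*r) ≤ 1 * (1+r^2*τ^2)^2 := by
  have hams : 2*r*|τ| ≤ 1+r^2*τ^2 := by nlinarith [sq_nonneg (1 - r*|τ|), sq_abs τ]
  have h1le : (1:ℝ) ≤ 1+r^2*τ^2 := by nlinarith [sq_nonneg τ]
  nlinarith [abs_nonneg τ, mul_pos hr0 hr0]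

set_option maxHeartbeats 2000000 in
open HilbMod in
/-- if `X` is a Hilbert `A`-module, `Y` a Hilbert `B`-module,
`φ : A → L(Y)` a *-homomorphism, and `V ∈ L(X)` satisfies `V ⊗ 1 ∈ K(X ⊗_A Y)`,
then `ran(V) ⊆ X·φ⁻¹(K(Y))`.

The interior tensor product `X ⊗_A Y` is represented by a Hilbert `B`-module `T`
together with a map `t : X × Y → T` with the defining properties of the tensor product. -/
theorem stmt12 {A B : Type} [NonUnitalCStarAlgebra A] [NonUnitalCStarAlgebra B]
    (X : HilbMod A) (Y : HilbMod B) (φ : A → Y.X → Y.X)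
    (hφ_add : ∀ a x y, φ a (x + y) = φ a x + φ a y)
    (hφ_add' : ∀ a b x, φ (a + b) x = φ a x + φ b x)
    (hφ_smul : ∀ a (t : ℂ) x, φ a (t • x) = t • φ a x)
    (hφ_smul' : ∀ (t : ℂ) a x, φ (t • a) x = t • φ a x)
    (hφ_mul : ∀ a b x, φ (a * b) x = φ a (φ b x))
    (hφ_adj : ∀ a x y, Y.ip (φ a x) y = Y.ip x (φ (star a) y))
    -- the interior tensor product `T = X ⊗_A Y`:
    (T : HilbMod B) (t : X.X → Y.X → T.X)
    (ht_addl : ∀ x x' y, t (x + x') y = t x y + t x' y)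
    (ht_addr : ∀ x y y', t x (y + y') = t x y + t x y')
    (ht_smul : ∀ (c : ℂ) x y, t (c • x) y = c • t x y)
    (ht_bal : ∀ x a y, t (X.sm x a) y = t x (φ a y))
    (ht_smr : ∀ x y b, t x (Y.sm y b) = T.sm (t x y) b)
    (ht_ip : ∀ x x' y y', T.ip (t x y) (t x' y') = Y.ip y (φ (X.ip x x') y'))
    (ht_dense : closure (Submodule.span ℂ {z | ∃ x y, z = t x y} : Set T.X) = Set.univ)
    -- `V ∈ L(X)`:
    (V : X.X → X.X)
    (hV_add : ∀ x y, V (x + y) = V x + V y)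
    (hV_smul : ∀ (c : ℂ) x, V (c • x) = c • V x)
    (hV_adj : ∃ V' : X.X → X.X, ∀ x y, X.ip (V x) y = X.ip x (V' y))
    -- `V ⊗ 1 ∈ K(X ⊗_A Y)`:
    (hVt : ∃ Vt : T.X → T.X, (∀ x y, Vt (t x y) = t (V x) y) ∧ T.IsCompactOp Vt) :
    ∀ ξ, V ξ ∈ closure (Submodule.span ℂ
      {z : X.X | ∃ ξ' a, Y.IsCompactOp (φ a) ∧ z = X.sm ξ' a} : Set X.X) := by
  obtain ⟨Vt, hVt1, hVt2⟩ := hVt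
  have hAdj : ∀ a : A, Y.Adj (φ a) (φ (star a)) := fun a x y => hφ_adj a x y
  -- bound for the maps `t x ·`
  have htb : ∀ x : X.X, ∃ C, 0 ≤ C ∧ ∀ η, ‖t x η‖ ≤ C * ‖η‖ := by
    intro x
    obtain ⟨M, hM0, hM⟩ := (hAdj (X.ip x x)).bound
    refine ⟨Real.sqrt M, Real.sqrt_nonneg M, fun η => ?_⟩
    have h2 : ‖t x η‖^2 ≤ M * ‖η‖^2 := by
      rw [T.ip_norm, ht_ip]
      calc ‖Y.ip η (φ (X.ip x x) η)‖ ≤ ‖η‖ * ‖φ (X.ip x x) η‖ := Y.cs _ _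
        _ ≤ ‖η‖ * (M * ‖η‖) := by gcongr; exact hM η
        _ = M * ‖η‖^2 := by ring
    calc ‖t x η‖ = Real.sqrt (‖t x η‖^2) := (Real.sqrt_sq (norm_nonneg _)).symm
      _ ≤ Real.sqrt (M * ‖η‖^2) := Real.sqrt_le_sqrt h2
      _ = Real.sqrt M * ‖η‖ := by
          rw [Real.sqrt_mul hM0, Real.sqrt_sq (norm_nonneg _)]
  -- elementary representation of elements of the span
  have spanrep : ∀ z ∈ Submodule.span ℂ {z : T.X | ∃ x y, z = t x y},
      ∃ l : List (X.X × Y.X), z = (l.map fun p => t p.1 p.2).sum := by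
    intro z hz
    induction hz using Submodule.span_induction with
    | mem v hv =>
      obtain ⟨x, y, rfl⟩ := hv
      exact ⟨[(x, y)], by simp⟩
    | zero => exact ⟨[], by simp⟩
    | add u v _ _ hu hv =>
      obtain ⟨l1, rfl⟩ := hu; obtain ⟨l2, rfl⟩ := hv
      exact ⟨l1 ++ l2, by simp⟩
    | smul c v _ hv =>
      obtain ⟨l, rfl⟩ := hv
      refine ⟨l.map fun p => (c • p.1, p.2), ?_⟩
      have hgen : ∀ l : List (X.X × Y.X), c • ((l.map fun p => t p.1 p.2).sum : T.X)
          = ((l.map fun p => (c • p.1, p.2)).map fun p => t p.1 p.2).sum := by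
        intro l
        induction l with
        | nil => simp
        | cons p l ih => simp only [List.map_cons, List.sum_cons, smul_add, ih, ht_smul]
      exact hgen l
  -- density
  have dense : ∀ (z : T.X) (δ : ℝ), 0 < δ →
      ∃ l : List (X.X × Y.X), ‖z - (l.map fun p => t p.1 p.2).sum‖ ≤ δ := by
    intro z δ hδ
    have hz : z ∈ closure (Submodule.span ℂ {z : T.X | ∃ x y, z = t x y} : Set T.X) := by
      rw [ht_dense]; trivial
    rw [Metric.mem_closure_iff] at hz
    obtain ⟨w, hw, hdist⟩ := hz δ hδ
    obtain ⟨l, rfl⟩ := spanrep w hw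
    exact ⟨l, by rw [← dist_eq_norm]; exact hdist.le⟩
  -- elementary approximation of Vt
  have elemapprox : ∀ ε > (0:ℝ), ∃ L : List ((X.X × Y.X) × (X.X × Y.X)),
      ∀ z, ‖Vt z - T.r1 (L.map fun q => (t q.1.1 q.1.2, t q.2.1 q.2.2)) z‖ ≤ ε * ‖z‖ := by
    have repl : ∀ (l : List (T.X × T.X)) (δ : ℝ), 0 < δ →
        ∃ L : List ((X.X × Y.X) × (X.X × Y.X)), ∀ z,
          ‖T.r1 l z - T.r1 (L.map fun q => (t q.1.1 q.1.2, t q.2.1 q.2.2)) z‖ ≤ δ * ‖z‖ := by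
      intro l
      induction l with
      | nil =>
        intro δ hδ
        refine ⟨[], fun z => ?_⟩
        simp [T.r1_nil]
        positivity
      | cons p l ih =>
        intro δ hδ
        obtain ⟨L', hL'⟩ := ih (δ/2) (by positivity)
        have hδ₁ : (0:ℝ) < min 1 (δ/(2*(‖p.1‖+‖p.2‖+2))) := by positivity
        set δ₁ := min 1 (δ/(2*(‖p.1‖+‖p.2‖+2))) with hδ₁def
        obtain ⟨la, hla⟩ := dense p.1 δ₁ hδ₁
        obtain ⟨lb, hlb⟩ := dense p.2 δ₁ hδ₁
        set As := ((la.map fun q => t q.1 q.2).sum : T.X) with hAs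
        set Bs := ((lb.map fun q => t q.1 q.2).sum : T.X) with hBs
        refine ⟨(la.flatMap fun u => lb.map fun v => (u, v)) ++ L', fun z => ?_⟩
        have hhead : ∀ (u : X.X × Y.X) (lb : List (X.X × Y.X)) (z : T.X),
            T.r1 ((lb.map fun v => (u, v)).map fun q => (t q.1.1 q.1.2, t q.2.1 q.2.2)) z
            = T.sm (t u.1 u.2) (T.ip ((lb.map fun q => t q.1 q.2).sum) z) := by
          intro u lb z
          rw [T.list_sum_ip, T.sm_list_sum, r1, List.map_map, List.map_map]
          rfl
        have hflat : ∀ (la lb : List (X.X × Y.X)) (z : T.X),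
            T.r1 ((la.flatMap fun u => lb.map fun v => (u, v)).map
              fun q => (t q.1.1 q.1.2, t q.2.1 q.2.2)) z
            = T.sm ((la.map fun q => t q.1 q.2).sum) (T.ip ((lb.map fun q => t q.1 q.2).sum) z) := by
          intro la lb z
          induction la with
          | nil => simp [r1, T.zero_sm]
          | cons u la ih =>
            rw [List.flatMap_cons, List.map_append, T.r1_append, ih, hhead,
              List.map_cons, List.sum_cons, T.sm_add]
        have hprod := hflat la lb z
        rw [List.map_append, T.r1_append, hprod, T.r1_cons]
        have key1 : ‖T.sm p.1 (T.ip p.2 z) - T.sm As (T.ip Bs z)‖ ≤ (δ/2) * ‖z‖ := by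
          have hsplit : T.sm p.1 (T.ip p.2 z) - T.sm As (T.ip Bs z)
              = T.sm (p.1 - As) (T.ip p.2 z) + T.sm As (T.ip (p.2 - Bs) z) := by
            rw [T.sm_sub, T.sub_ip, T.sm_sub']
            abel
          have hAle : ‖As‖ ≤ ‖p.1‖ + δ₁ := by
            calc ‖As‖ = ‖p.1 - (p.1 - As)‖ := by congr 1; abel
              _ ≤ ‖p.1‖ + ‖p.1 - As‖ := norm_sub_le _ _
              _ ≤ ‖p.1‖ + δ₁ := add_le_add le_rfl hla
          have hδ₁1 : δ₁ ≤ 1 := min_le_left _ _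
          have hδ₁2 : δ₁ * (2*(‖p.1‖+‖p.2‖+2)) ≤ δ := by
            have h := min_le_right 1 (δ/(2*(‖p.1‖+‖p.2‖+2)))
            rw [← hδ₁def] at h
            exact (le_div_iff₀ (by positivity)).mp h
          have hb1 : ‖T.ip p.2 z‖ ≤ ‖p.2‖*‖z‖ := T.cs _ _
          have hb2 : ‖T.ip (p.2 - Bs) z‖ ≤ δ₁*‖z‖ :=
            (T.cs _ _).trans (mul_le_mul_of_nonneg_right hlb (norm_nonneg z))
          calc ‖T.sm p.1 (T.ip p.2 z) - T.sm As (T.ip Bs z)‖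
              ≤ ‖T.sm (p.1 - As) (T.ip p.2 z)‖ + ‖T.sm As (T.ip (p.2 - Bs) z)‖ := by
                rw [hsplit]; exact norm_add_le _ _
            _ ≤ ‖p.1 - As‖*‖T.ip p.2 z‖ + ‖As‖*‖T.ip (p.2 - Bs) z‖ :=
                add_le_add (T.norm_sm_le _ _) (T.norm_sm_le _ _)
            _ ≤ δ₁*(‖p.2‖*‖z‖) + (‖p.1‖+δ₁)*(δ₁*‖z‖) :=
                add_le_add (mul_le_mul hla hb1 (norm_nonneg _) hδ₁.le)
                  (mul_le_mul hAle hb2 (norm_nonneg _) (by positivity))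
            _ ≤ (δ/2) * ‖z‖ := by
                have hsc : δ₁*‖p.2‖ + (‖p.1‖+δ₁)*δ₁ ≤ δ/2 := by
                  nlinarith [norm_nonneg p.1, norm_nonneg p.2, hδ₁.le, hδ₁1, hδ₁2]
                calc δ₁*(‖p.2‖*‖z‖) + (‖p.1‖+δ₁)*(δ₁*‖z‖)
                    = (δ₁*‖p.2‖ + (‖p.1‖+δ₁)*δ₁)*‖z‖ := by ring
                  _ ≤ (δ/2)*‖z‖ := mul_le_mul_of_nonneg_right hsc (norm_nonneg z)
        calc ‖T.sm p.1 (T.ip p.2 z) + T.r1 l z -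
              (T.sm As (T.ip Bs z) + T.r1 (L'.map fun q => (t q.1.1 q.1.2, t q.2.1 q.2.2)) z)‖
            ≤ ‖T.sm p.1 (T.ip p.2 z) - T.sm As (T.ip Bs z)‖ +
              ‖T.r1 l z - T.r1 (L'.map fun q => (t q.1.1 q.1.2, t q.2.1 q.2.2)) z‖ := by
              have : T.sm p.1 (T.ip p.2 z) + T.r1 l z -
                  (T.sm As (T.ip Bs z) + T.r1 (L'.map fun q => (t q.1.1 q.1.2, t q.2.1 q.2.2)) z)
                  = (T.sm p.1 (T.ip p.2 z) - T.sm As (T.ip Bs z)) +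
                    (T.r1 l z - T.r1 (L'.map fun q => (t q.1.1 q.1.2, t q.2.1 q.2.2)) z) := by
                abel
              rw [this]; exact norm_add_le _ _
          _ ≤ (δ/2) * ‖z‖ + (δ/2) * ‖z‖ := add_le_add key1 (hL' z)
          _ = δ * ‖z‖ := by ring
    intro ε hε
    obtain ⟨l, hl⟩ := T.lists_of_isCompactOp hVt2 (ε/2) (by positivity)
    obtain ⟨L, hL⟩ := repl l (ε/2) (by positivity)
    refine ⟨L, fun z => ?_⟩
    calc ‖Vt z - T.r1 (L.map fun q => (t q.1.1 q.1.2, t q.2.1 q.2.2)) z‖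
        ≤ ‖Vt z - T.r1 l z‖ + ‖T.r1 l z - T.r1 (L.map fun q => (t q.1.1 q.1.2, t q.2.1 q.2.2)) z‖ := by
          have : Vt z - T.r1 (L.map fun q => (t q.1.1 q.1.2, t q.2.1 q.2.2)) z
              = (Vt z - T.r1 l z) + (T.r1 l z - T.r1 (L.map fun q => (t q.1.1 q.1.2, t q.2.1 q.2.2)) z) := by abel
          rw [this]; exact norm_add_le _ _
      _ ≤ (ε/2)*‖z‖ + (ε/2)*‖z‖ := add_le_add (hl z) (hL z)
      _ = ε * ‖z‖ := by ring
  -- STEP 2 : φ (⟨ξ₀, V ξ'⟩) is a compact operator on Y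
  have step2 : ∀ ξ₀ ξ' : X.X, Y.IsCompactOp (φ (X.ip ξ₀ (V ξ'))) := by
    intro ξ₀ ξ'
    obtain ⟨C0, hC00, hC0⟩ := htb ξ₀
    obtain ⟨C', hC'0, hC'⟩ := htb ξ'
    apply Y.isCompactOp_of_lists
    intro ε hε
    have hε₂ : (0:ℝ) < ε/((C0+1)*(C'+1)) :=
      div_pos hε (mul_pos (by linarith) (by linarith))
    obtain ⟨L, hL⟩ := elemapprox _ hε₂
    refine ⟨L.map fun q => (φ (X.ip ξ₀ q.1.1) q.1.2, φ (star (X.ip q.2.1 ξ')) q.2.2),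
      fun η => ?_⟩
    -- the inner-product identity between the Y-side and T-side approximants
    have hid : ∀ (L : List ((X.X × Y.X) × (X.X × Y.X))) (η'' η : Y.X),
        Y.ip η'' (Y.r1 (L.map fun q =>
            (φ (X.ip ξ₀ q.1.1) q.1.2, φ (star (X.ip q.2.1 ξ')) q.2.2)) η)
        = T.ip (t ξ₀ η'') (T.r1 (L.map fun q => (t q.1.1 q.1.2, t q.2.1 q.2.2)) (t ξ' η)) := by
      intro L η'' η
      induction L with
      | nil => simp [Y.ip_zero, T.ip_zero]
      | cons q L ih =>
        simp only [List.map_cons, Y.r1_cons, T.r1_cons, Y.ip_add, T.ip_add, ih]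
        congr 1
        rw [Y.ip_sm, ← ht_ip, hφ_adj, star_star, ← ht_ip, T.ip_sm]
    have hW : ∀ (η'' η : Y.X), Y.ip η'' (φ (X.ip ξ₀ (V ξ')) η)
        = T.ip (t ξ₀ η'') (Vt (t ξ' η)) := by
      intro η'' η
      rw [← ht_ip, hVt1]
    set SY := Y.r1 (L.map fun q =>
        (φ (X.ip ξ₀ q.1.1) q.1.2, φ (star (X.ip q.2.1 ξ')) q.2.2)) η with hSY
    set d := φ (X.ip ξ₀ (V ξ')) η - SY with hd
    have hipd : Y.ip d d = T.ip (t ξ₀ d)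
        (Vt (t ξ' η) - T.r1 (L.map fun q => (t q.1.1 q.1.2, t q.2.1 q.2.2)) (t ξ' η)) := by
      rw [T.ip_sub]
      rw [hd, Y.ip_sub, hW, hSY, hid]
    have hnd : ‖d‖^2 ≤ ‖d‖ * (C0 * ((ε/((C0+1)*(C'+1))) * (C' * ‖η‖))) := by
      rw [Y.ip_norm, hipd]
      calc ‖T.ip (t ξ₀ d) (Vt (t ξ' η) - T.r1 (L.map fun q => (t q.1.1 q.1.2, t q.2.1 q.2.2)) (t ξ' η))‖
          ≤ ‖t ξ₀ d‖ * ‖Vt (t ξ' η) - T.r1 (L.map fun q => (t q.1.1 q.1.2, t q.2.1 q.2.2)) (t ξ' η)‖ :=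
            T.cs _ _
        _ ≤ (C0 * ‖d‖) * ((ε/((C0+1)*(C'+1))) * ‖t ξ' η‖) :=
            mul_le_mul (hC0 d) (hL _) (norm_nonneg _) (mul_nonneg hC00 (norm_nonneg _))
        _ ≤ (C0 * ‖d‖) * ((ε/((C0+1)*(C'+1))) * (C' * ‖η‖)) := by
            have := hC' η
            gcongr
        _ = ‖d‖ * (C0 * ((ε/((C0+1)*(C'+1))) * (C' * ‖η‖))) := by ring
    have hdle : ‖d‖ ≤ C0 * ((ε/((C0+1)*(C'+1))) * (C' * ‖η‖)) := by
      rcases (eq_or_lt_of_le (norm_nonneg d)).imp Eq.symm id with h | h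
      · exact h.le.trans (mul_nonneg hC00 (mul_nonneg hε₂.le
          (mul_nonneg hC'0 (norm_nonneg _))))
      · have h2 : ‖d‖ * ‖d‖ ≤ ‖d‖ * (C0 * ((ε/((C0+1)*(C'+1))) * (C' * ‖η‖))) := by
          rw [← sq]; exact hnd
        exact le_of_mul_le_mul_left h2 h
    calc ‖φ (X.ip ξ₀ (V ξ')) η - SY‖ = ‖d‖ := by rw [hd]
      _ ≤ C0 * ((ε/((C0+1)*(C'+1))) * (C' * ‖η‖)) := hdle
      _ = ((C0*C')/((C0+1)*(C'+1))) * (ε * ‖η‖) := by field_simp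
      _ ≤ 1 * (ε * ‖η‖) := by
          have h1 : (C0*C')/((C0+1)*(C'+1)) ≤ 1 := by
            rw [div_le_one (mul_pos (by linarith) (by linarith))]
            nlinarith
          exact mul_le_mul_of_nonneg_right h1 (mul_nonneg hε.le (norm_nonneg _))
      _ = ε * ‖η‖ := one_mul _
  -- STEP 3
  intro ξ
  rw [Metric.mem_closure_iff]
  intro ε hε
  set x := V ξ with hx
  set a := X.ip x x with ha
  have ha_sa : IsSelfAdjoint a := X.ip_self_sa x
  have hKa : Y.IsCompactOp (φ a) := by
    have := step2 x ξ
    rwa [← hx, ← ha] at this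
  obtain ⟨r, hr⟩ : ∃ r : ℝ, r = (ε^2)⁻¹ := ⟨_, rfl⟩
  have hr0 : 0 < r := by rw [hr]; positivity
  obtain ⟨s, hs⟩ : ∃ s : ℝ, s = r^2 := ⟨_, rfl⟩
  have hs0 : 0 < s := by rw [hs]; positivity
  set h : ℝ → ℝ := fun τ => s*τ/(1+s*τ^2) with hh
  have hden : ∀ τ : ℝ, (0:ℝ) < 1+s*τ^2 := fun τ => by positivity
  have hhc : Continuous h := by
    apply Continuous.div (by fun_prop) (by fun_prop)
    exact fun τ => (hden τ).ne'
  set u : A := cfcₙ (fun τ => h τ * τ) a with hu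
  have hgc : Continuous (fun τ : ℝ => h τ * τ) := hhc.mul continuous_id'
  have hg0 : (fun τ : ℝ => h τ * τ) 0 = 0 := by simp [hh]
  have husplit : u = cfcₙ h a * a := by
    rw [hu, cfcₙ_mul h (fun τ => τ) a hhc.continuousOn (by simp [hh])
      continuous_id'.continuousOn rfl, cfcₙ_id' ℝ a]
  have hu_sa : IsSelfAdjoint u := by
    rw [hu]; exact cfcₙ_predicate _ a
  -- φ u is compact
  have hcomp : Y.IsCompactOp (φ u) := by
    have heq : φ u = fun η => φ (cfcₙ h a) (φ a η) := by
      funext η; rw [husplit, hφ_mul]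
    rw [heq]
    exact HilbMod.IsCompactOp.comp (Z := Y) (f := φ a) (g := φ (cfcₙ h a)) hKa
      (hφ_add _) (fun x' b => (hAdj (cfcₙ h a)).sm x' b) (hAdj _).bound
  -- the approximation estimate
  have hexp : X.ip (x - X.sm x u) (x - X.sm x u)
      = cfcₙ (fun τ => (τ - (h τ * τ)*τ) - (τ*(h τ * τ) - (h τ * τ)*(τ*(h τ * τ)))) a := by
    have e1 : X.ip (x - X.sm x u) (x - X.sm x u)
        = (a - u*a) - (a*u - u*(a*u)) := by
      rw [X.ip_sub, X.sub_ip, X.sub_ip, X.sm_ip, X.ip_sm, X.sm_ip, X.ip_sm, ← ha,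
        hu_sa.star_eq]
    rw [e1]
    have c1 : cfcₙ (fun τ => (h τ * τ)*τ) a = u * a := by
      rw [cfcₙ_mul (fun τ => h τ * τ) (fun τ => τ) a hgc.continuousOn hg0
        continuous_id'.continuousOn rfl, cfcₙ_id' ℝ a, hu]
    have c2 : cfcₙ (fun τ => τ*(h τ * τ)) a = a * u := by
      rw [cfcₙ_mul (fun τ => τ) (fun τ => h τ * τ) a continuous_id'.continuousOn rfl
        hgc.continuousOn hg0, cfcₙ_id' ℝ a, hu]
    have c3 : cfcₙ (fun τ => (h τ * τ)*(τ*(h τ * τ))) a = u * (a * u) := by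
      rw [cfcₙ_mul (fun τ => h τ * τ) (fun τ => τ*(h τ * τ)) a hgc.continuousOn hg0
        (continuous_id'.mul hgc).continuousOn (by simp), c2, hu]
    rw [cfcₙ_sub (fun τ => τ - (h τ * τ)*τ) (fun τ => τ*(h τ * τ) - (h τ * τ)*(τ*(h τ * τ))) a ((continuous_id'.sub (hgc.mul continuous_id')).continuousOn) (by simp)
      (((continuous_id'.mul hgc).sub (hgc.mul (continuous_id'.mul hgc))).continuousOn) (by simp)]
    rw [cfcₙ_sub (fun τ => τ) (fun τ => (h τ * τ)*τ) a (continuous_id'.continuousOn) rfl ((hgc.mul continuous_id').continuousOn)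
      (by simp)]
    rw [cfcₙ_sub (fun τ => τ*(h τ * τ)) (fun τ => (h τ * τ)*(τ*(h τ * τ))) a ((continuous_id'.mul hgc).continuousOn) (by simp)
      ((hgc.mul (continuous_id'.mul hgc)).continuousOn) (by simp)]
    rw [cfcₙ_id' ℝ a, c1, c2, c3]
  have hbound : ‖x - X.sm x u‖^2 ≤ 1/(2*r) := by
    rw [X.ip_norm, hexp]
    apply norm_cfcₙ_le
    intro τ _
    have hψ : (τ - (h τ * τ)*τ) - (τ*(h τ * τ) - (h τ * τ)*(τ*(h τ * τ)))
        = τ/(1+s*τ^2)^2 := by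
      rw [hh]
      field_simp
      ring
    rw [hψ, Real.norm_eq_abs, abs_div, abs_of_pos (pow_pos (hden τ) 2)]
    rw [div_le_div_iff₀ (pow_pos (hden τ) 2) (by positivity)]
    rw [hs]
    exact psi_ineq r τ hr0
  -- conclude
  have hlt : ‖x - X.sm x u‖ < ε := by
    have h2 : ‖x - X.sm x u‖^2 < ε^2 := by
      have : 1/(2*r) = ε^2/2 := by rw [hr]; field_simp
      rw [this] at hbound
      nlinarith
    exact lt_of_pow_lt_pow_left₀ 2 hε.le h2
  refine ⟨X.sm x u, ?_, ?_⟩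
  · exact Submodule.subset_span ⟨x, u, hcomp, rfl⟩
  · rw [dist_eq_norm]
    exact hlt
end
end
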